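/- arXiv:2002.06855 — 4 statements merged into one kernel-verified Lean document; each statement's English description precedes it below -/
import Mathlib

section
/- Let Y be a real normed vector space and L : Y → ℝ a three times continuously (Fréchet) differentiable functional. Then for any y₁, y₂ ∈ Y, setting e := y₁ − y₂, one has the box-rule representation L(y₁) − L(y₂) = (1/2)·(L'(y₂)(e) + L'(y₁)(e)) + ℛ, where the remainder is ℛ = (1/2) ∫₀¹ L'''(y₂ + s·e)(e,e,e)·s·(s−1) ds. -/
/-- Box-rule representation with exact third-order remainder:
for a `C³` functional `L : Y → ℝ` on a real normed space `Y` and any `y₁, y₂ ∈ Y`,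
with `e := y₁ − y₂`,
`L(y₁) − L(y₂) = (1/2)(L'(y₂)(e) + L'(y₁)(e))
  + (1/2) ∫₀¹ L'''(y₂ + s e)(e,e,e) · s(s−1) ds`. -/
theorem box_rule_representation
    {Y : Type*} [NormedAddCommGroup Y] [NormedSpace ℝ Y]
    (L : Y → ℝ) (hL : ContDiff ℝ 3 L) (y₁ y₂ : Y) :
    L y₁ - L y₂ =
      (1/2) * ((fderiv ℝ L y₂) (y₁ - y₂) + (fderiv ℝ L y₁) (y₁ - y₂)) +
      (1/2) * ∫ s in (0:ℝ)..1,
        (iteratedFDeriv ℝ 3 L (y₂ + s • (y₁ - y₂)))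
          ![y₁ - y₂, y₁ - y₂, y₁ - y₂] * s * (s - 1) := by
  set e := y₁ - y₂ with he
  set γ : ℝ → Y := fun s => y₂ + s • e with hγ
  have hγd : ∀ s : ℝ, HasDerivAt γ e s := by
    intro s
    simpa [hγ] using ((hasDerivAt_id s).smul_const e).const_add y₂
  have hγc : Continuous γ := by continuity
  set F1 := fderiv ℝ L with hF1
  set F2 := fderiv ℝ F1 with hF2
  have hLd : Differentiable ℝ L := hL.differentiable (by norm_num)
  have hF1c : ContDiff ℝ 2 F1 := (hL.fderiv_right (by norm_num))
  have hF2c : ContDiff ℝ 1 F2 := (hF1c.fderiv_right (by norm_num))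
  have hF1d : Differentiable ℝ F1 := hF1c.differentiable (by norm_num)
  have hF2d : Differentiable ℝ F2 := hF2c.differentiable (by norm_num)
  -- scalar functions along the line
  set g₀ : ℝ → ℝ := fun s => L (γ s) with hg₀
  set g₁ : ℝ → ℝ := fun s => F1 (γ s) e with hg₁
  set g₂ : ℝ → ℝ := fun s => F2 (γ s) e e with hg₂
  set g₃ : ℝ → ℝ := fun s => fderiv ℝ F2 (γ s) e e e with hg₃
  have hd0 : ∀ s : ℝ, HasDerivAt g₀ (g₁ s) s := fun s =>
    ((hLd (γ s)).hasFDerivAt).comp_hasDerivAt s (hγd s)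
  have hd1 : ∀ s : ℝ, HasDerivAt g₁ (g₂ s) s := by
    intro s
    have h : HasDerivAt (fun s => F1 (γ s)) (F2 (γ s) e) s :=
      ((hF1d (γ s)).hasFDerivAt).comp_hasDerivAt s (hγd s)
    exact h.clm_apply (hasDerivAt_const s e) |>.congr_deriv (by simp [hg₂])
  have hd2 : ∀ s : ℝ, HasDerivAt g₂ (g₃ s) s := by
    intro s
    have h : HasDerivAt (fun s => F2 (γ s)) (fderiv ℝ F2 (γ s) e) s := by
      exact HasFDerivAt.comp_hasDerivAt (l := F2) (l' := fderiv ℝ F2 (γ s)) s ((hF2d (γ s)).hasFDerivAt) (hγd s)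
    have h2 := (h.clm_apply (hasDerivAt_const s e)).clm_apply (hasDerivAt_const s e)
    exact h2.congr_deriv (by simp [hg₃])
  -- identify integrand with g₃
  have hiter : ∀ s : ℝ, (iteratedFDeriv ℝ 3 L (γ s)) ![e, e, e] = g₃ s := by
    intro s
    rw [iteratedFDeriv_succ_apply_right, iteratedFDeriv_two_apply]
    rfl
  -- continuity and integrability
  have hc1 : Continuous g₁ := ((hF1c.continuous).comp hγc).clm_apply continuous_const
  have hc2 : Continuous g₂ :=
    (((hF2c.continuous).comp hγc).clm_apply continuous_const).clm_apply continuous_const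
  have hc3 : Continuous g₃ :=
    ((((hF2c.continuous_fderiv one_ne_zero).comp hγc).clm_apply continuous_const).clm_apply
      continuous_const).clm_apply continuous_const
  have hI1 : IntervalIntegrable g₁ MeasureTheory.volume 0 1 := hc1.intervalIntegrable _ _
  have hI3 : IntervalIntegrable g₃ MeasureTheory.volume 0 1 := hc3.intervalIntegrable _ _
  -- first integration by parts
  have ibp1 : ∫ s in (0:ℝ)..1, (s^2 - s) * g₃ s =
      (1^2 - 1) * g₂ 1 - (0^2 - 0) * g₂ 0 - ∫ s in (0:ℝ)..1, (2*s - 1) * g₂ s := by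
    apply intervalIntegral.integral_mul_deriv_eq_deriv_mul
      (u := fun s : ℝ => s^2 - s) (u' := fun s : ℝ => 2*s - 1) (v := g₂) (v' := g₃)
    · intro x _
      have := ((hasDerivAt_pow 2 x).sub (hasDerivAt_id x))
      exact this.congr_deriv (by simp)
    · intro x _; exact hd2 x
    · exact (Continuous.intervalIntegrable (by fun_prop) _ _)
    · exact hI3
  -- second integration by parts
  have ibp2 : ∫ s in (0:ℝ)..1, (2*s - 1) * g₂ s =
      (2*1 - 1) * g₁ 1 - (2*0 - 1) * g₁ 0 - ∫ s in (0:ℝ)..1, 2 * g₁ s := by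
    apply intervalIntegral.integral_mul_deriv_eq_deriv_mul
      (u := fun s : ℝ => 2*s - 1) (u' := fun _ : ℝ => 2) (v := g₁) (v' := g₂)
    · intro x _
      have := ((hasDerivAt_id x).const_mul 2).sub_const 1
      simpa using this
    · intro x _; exact hd1 x
    · exact (Continuous.intervalIntegrable continuous_const _ _)
    · exact hc2.intervalIntegrable _ _
  have ftc : ∫ s in (0:ℝ)..1, g₁ s = g₀ 1 - g₀ 0 :=
    intervalIntegral.integral_eq_sub_of_hasDerivAt (fun x _ => hd0 x) hI1
  have hmul : ∫ s in (0:ℝ)..1, 2 * g₁ s = 2 * (g₀ 1 - g₀ 0) := by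
    rw [intervalIntegral.integral_const_mul, ftc]
  -- rewrite the integrand in the goal
  have hint : (∫ s in (0:ℝ)..1,
      (iteratedFDeriv ℝ 3 L (y₂ + s • e)) ![e, e, e] * s * (s - 1)) =
      ∫ s in (0:ℝ)..1, (s^2 - s) * g₃ s := by
    apply intervalIntegral.integral_congr
    intro s _
    have := hiter s
    simp only [hγ] at this
    simp only []
    rw [this]; ring
  -- endpoint values
  have e0 : g₀ 0 = L y₂ := by simp [hg₀, hγ]
  have e1 : g₀ 1 = L y₁ := by simp [hg₀, hγ, he]
  have f0 : g₁ 0 = (F1 y₂) e := by simp [hg₁, hγ]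
  have f1 : g₁ 1 = (F1 y₁) e := by simp [hg₁, hγ, he]
  rw [hint, ibp1, ibp2, hmul, e0, e1] at *
  rw [← f0, ← f1]
  ring
end

section
/- (Abstract error representation, Lemma 3.1.) Let Y be a real normed vector space and let L, L̃ : Y → ℝ be three times continuously (Fréchet) differentiable functionals. Let Y₁ ⊆ Y and Y₂ ⊆ Y be linear subspaces. Suppose y₁ ∈ Y₁ is a stationary point of L on Y₁, i.e. L'(y₁)(δy₁) = 0 for all δy₁ ∈ Y₁, and y₂ ∈ Y₂ is a stationary point of L̃ on Y₂, i.e. L̃'(y₂)(δy₂) = 0 for all δy₂ ∈ Y₂. Assume additionally the compatibility condition L'(y₁)(y₂) = 0. Then for every ỹ₂ ∈ Y₂ one has the error representation L(y₁) − L̃(y₂) = (1/2)·L'(y₂)(y₁ − ỹ₂) + (1/2)·(L − L̃)'(y₂)(ỹ₂ − y₂) + (L − L̃)(y₂) + ℛ, where, with e := y₁ − y₂, the remainder is ℛ = (1/2) ∫₀¹ L'''(y₂ + s·e)(e,e,e)·s·(s−1) ds. -/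
set_option maxHeartbeats 1000000 in
open intervalIntegral in
/-- Abstract DWR error representation (Lemma 3.1):
for `C³` functionals `L, L̃ : Y → ℝ`, subspaces `Y₁, Y₂ ⊆ Y`,
a stationary point `y₁ ∈ Y₁` of `L` on `Y₁`, a stationary point `y₂ ∈ Y₂` of `L̃`
on `Y₂`, assuming the compatibility condition `L'(y₁)(y₂) = 0`, one has for every
`ỹ₂ ∈ Y₂`, with `e := y₁ − y₂`,
`L(y₁) − L̃(y₂) = (1/2) L'(y₂)(y₁ − ỹ₂) + (1/2)(L − L̃)'(y₂)(ỹ₂ − y₂)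
  + (L − L̃)(y₂) + (1/2) ∫₀¹ L'''(y₂ + s e)(e,e,e) · s(s−1) ds`. -/
theorem abstract_error_representation
    {Y : Type*} [NormedAddCommGroup Y] [NormedSpace ℝ Y]
    (L Ltil : Y → ℝ) (hL : ContDiff ℝ 3 L) (hLtil : ContDiff ℝ 3 Ltil)
    (Y₁ Y₂ : Submodule ℝ Y)
    (y₁ : Y) (hy₁ : y₁ ∈ Y₁)
    (y₂ : Y) (hy₂ : y₂ ∈ Y₂)
    (hstat₁ : ∀ δ ∈ Y₁, (fderiv ℝ L y₁) δ = 0)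
    (hstat₂ : ∀ δ ∈ Y₂, (fderiv ℝ Ltil y₂) δ = 0)
    (hcompat : (fderiv ℝ L y₁) y₂ = 0) :
    ∀ ytil₂ ∈ Y₂,
      L y₁ - Ltil y₂ =
        (1/2) * (fderiv ℝ L y₂) (y₁ - ytil₂) +
        (1/2) * ((fderiv ℝ L y₂) (ytil₂ - y₂) - (fderiv ℝ Ltil y₂) (ytil₂ - y₂)) +
        (L y₂ - Ltil y₂) +
        (1/2) * ∫ s in (0:ℝ)..1,
          (iteratedFDeriv ℝ 3 L (y₂ + s • (y₁ - y₂)))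
            ![y₁ - y₂, y₁ - y₂, y₁ - y₂] * s * (s - 1) := by
  intro ytil₂ hytil₂
  set e : Y := y₁ - y₂ with he
  set g : ℝ → Y := fun s => y₂ + s • e with hgdef
  -- basic smoothness facts
  have hL1 : ContDiff ℝ 2 (fderiv ℝ L) := hL.fderiv_right (by norm_num)
  have hL2 : ContDiff ℝ 1 (fderiv ℝ (fderiv ℝ L)) := hL1.fderiv_right (by norm_num)
  have hL3 : Continuous (fderiv ℝ (fderiv ℝ (fderiv ℝ L))) := hL2.continuous_fderiv (by norm_num)
  -- the three directional derivative functions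
  set F₁ : Y → ℝ := fun y => fderiv ℝ L y e with hF₁
  set F₂ : Y → ℝ := fun y => (fderiv ℝ (fderiv ℝ L) y e) e with hF₂
  set F₃ : Y → ℝ := fun y => ((fderiv ℝ (fderiv ℝ (fderiv ℝ L)) y e) e) e with hF₃
  -- identify F₃ with the iterated derivative
  have hiter : ∀ p : Y, iteratedFDeriv ℝ 3 L p ![e, e, e] = F₃ p := by
    intro p
    have h1 : iteratedFDeriv ℝ 3 L p ![e, e, e]
        = iteratedFDeriv ℝ 2 (fderiv ℝ L) p (Fin.init ![e, e, e]) (![e, e, e] (Fin.last 2)) :=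
      iteratedFDeriv_succ_apply_right _
    have h2 : iteratedFDeriv ℝ 2 (fderiv ℝ L) p (Fin.init ![e, e, e])
        = iteratedFDeriv ℝ 1 (fderiv ℝ (fderiv ℝ L)) p (Fin.init (Fin.init ![e, e, e]))
            ((Fin.init ![e, e, e]) (Fin.last 1)) :=
      iteratedFDeriv_succ_apply_right _
    rw [h1, h2, iteratedFDeriv_one_apply]
    simp [Fin.init, Fin.last, hF₃]
  -- derivative of the path
  have hg : ∀ s : ℝ, HasDerivAt g e s := by
    intro s
    simpa [hgdef] using (((hasDerivAt_id s).smul_const e).const_add y₂)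
  -- chain rules along the line
  have hD0 : ∀ s : ℝ, HasDerivAt (fun t => L (g t)) (F₁ (g s)) s := by
    intro s
    exact ((hL.differentiable (by norm_num)).differentiableAt.hasFDerivAt).comp_hasDerivAt s (hg s)
  have hD1 : ∀ s : ℝ, HasDerivAt (fun t => F₁ (g t)) (F₂ (g s)) s := by
    intro s
    have hd : HasFDerivAt (fderiv ℝ L) (fderiv ℝ (fderiv ℝ L) (g s)) (g s) :=
      ((hL1.differentiable (by norm_num)).differentiableAt).hasFDerivAt
    have hF : HasFDerivAt F₁
        ((ContinuousLinearMap.apply ℝ ℝ e).comp (fderiv ℝ (fderiv ℝ L) (g s))) (g s) :=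
      (ContinuousLinearMap.apply ℝ ℝ e).hasFDerivAt.comp (g s) hd
    exact hF.comp_hasDerivAt s (hg s)
  have hD2 : ∀ s : ℝ, HasDerivAt (fun t => F₂ (g t)) (F₃ (g s)) s := by
    intro s
    have hd : HasFDerivAt (fderiv ℝ (fderiv ℝ L)) (fderiv ℝ (fderiv ℝ (fderiv ℝ L)) (g s)) (g s) :=
      ((hL2.differentiable (by norm_num)).differentiableAt).hasFDerivAt
    have hstep : HasFDerivAt
        (⇑(ContinuousLinearMap.apply ℝ (Y →L[ℝ] ℝ) e) ∘ fderiv ℝ (fderiv ℝ L))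
        ((ContinuousLinearMap.apply ℝ (Y →L[ℝ] ℝ) e).comp
          (fderiv ℝ (fderiv ℝ (fderiv ℝ L)) (g s))) (g s) :=
      (ContinuousLinearMap.apply ℝ (Y →L[ℝ] ℝ) e).hasFDerivAt.comp (F := Y →L[ℝ] Y →L[ℝ] ℝ) (G := Y →L[ℝ] ℝ) (g s) hd
    have hF : HasFDerivAt
        (⇑(ContinuousLinearMap.apply ℝ ℝ e) ∘
          (⇑(ContinuousLinearMap.apply ℝ (Y →L[ℝ] ℝ) e) ∘ fderiv ℝ (fderiv ℝ L)))
        ((ContinuousLinearMap.apply ℝ ℝ e).comp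
          ((ContinuousLinearMap.apply ℝ (Y →L[ℝ] ℝ) e).comp
            (fderiv ℝ (fderiv ℝ (fderiv ℝ L)) (g s)))) (g s) :=
      (ContinuousLinearMap.apply ℝ ℝ e).hasFDerivAt.comp (g s) hstep
    exact hF.comp_hasDerivAt s (hg s)
  -- continuity of the composed functions
  have hgc : Continuous g := by fun_prop
  have hc1 : Continuous fun s => F₁ (g s) :=
    ((hL1.continuous.clm_apply continuous_const).comp hgc)
  have hc2 : Continuous fun s => F₂ (g s) :=
    (((hL2.continuous.clm_apply continuous_const).clm_apply continuous_const).comp hgc)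
  have hc3 : Continuous fun s => F₃ (g s) := by
    have h1 : Continuous (fun y => fderiv ℝ (fderiv ℝ (fderiv ℝ L)) y e) :=
      Continuous.clm_apply (E := Y) (F := Y →L[ℝ] Y →L[ℝ] ℝ) (f := fderiv ℝ (fderiv ℝ (fderiv ℝ L)))
        (g := fun _ => e) hL3 continuous_const
    exact (((h1.clm_apply continuous_const).clm_apply
        continuous_const).comp hgc)
  -- endpoint values
  have hg0 : g 0 = y₂ := by simp [hgdef]
  have hg1 : g 1 = y₁ := by simp [hgdef, he]
  have hF₁y₁ : F₁ y₁ = 0 := by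
    have : fderiv ℝ L y₁ e = fderiv ℝ L y₁ y₁ - fderiv ℝ L y₁ y₂ := by
      rw [he, map_sub]
    simp [hF₁, this, hstat₁ y₁ hy₁, hcompat]
  -- fundamental theorem of calculus
  have hI1 : ∫ s in (0:ℝ)..1, F₁ (g s) = L (g 1) - L (g 0) :=
    integral_eq_sub_of_hasDerivAt (fun x _ => hD0 x) (hc1.intervalIntegrable 0 1)
  -- first integration by parts : ∫ F₃∘g · s(s-1) + F₂∘g · (2s-1) = 0
  have hv1 : ∀ x : ℝ, HasDerivAt (fun s => s * (s - 1)) (2 * x - 1) x := by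
    intro x
    have := (hasDerivAt_id x).mul ((hasDerivAt_id x).sub_const 1)
    simp only [id] at this
    exact this.congr_deriv (by ring)
  have hv2 : ∀ x : ℝ, HasDerivAt (fun s : ℝ => 2 * s - 1) 2 x := by
    intro x
    simpa using ((hasDerivAt_id x).const_mul 2).sub_const 1
  have hibp1 : (∫ x in (0:ℝ)..1, F₃ (g x) * (x * (x - 1)) + F₂ (g x) * (2 * x - 1)) =
      F₂ (g 1) * (1 * (1 - 1)) - F₂ (g 0) * (0 * (0 - 1)) :=
    integral_deriv_mul_eq_sub (fun x _ => hD2 x) (fun x _ => hv1 x)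
      (hc3.intervalIntegrable 0 1)
      ((continuous_const.mul continuous_id |>.sub continuous_const).intervalIntegrable 0 1)
  -- second integration by parts : ∫ F₂∘g · (2s-1) + F₁∘g · 2 = F₁(g 1) + F₁(g 0)
  have hibp2 : (∫ x in (0:ℝ)..1, F₂ (g x) * (2 * x - 1) + F₁ (g x) * 2) =
      F₁ (g 1) * (2 * 1 - 1) - F₁ (g 0) * (2 * 0 - 1) :=
    integral_deriv_mul_eq_sub (fun x _ => hD1 x) (fun x _ => hv2 x)
      (hc2.intervalIntegrable 0 1)
      (continuous_const.intervalIntegrable 0 1)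
  -- split the integrals
  have hint3 : IntervalIntegrable (fun x => F₃ (g x) * (x * (x - 1))) MeasureTheory.volume 0 1 :=
    (hc3.mul (continuous_id.mul (continuous_id.sub continuous_const))).intervalIntegrable 0 1
  have hint2 : IntervalIntegrable (fun x => F₂ (g x) * (2 * x - 1)) MeasureTheory.volume 0 1 :=
    (hc2.mul ((continuous_const.mul continuous_id).sub continuous_const)).intervalIntegrable 0 1
  have hint1 : IntervalIntegrable (fun x => F₁ (g x) * 2) MeasureTheory.volume 0 1 :=
    (hc1.mul continuous_const).intervalIntegrable 0 1
  have hsplit1 : (∫ x in (0:ℝ)..1, F₃ (g x) * (x * (x - 1)) + F₂ (g x) * (2 * x - 1)) =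
      (∫ x in (0:ℝ)..1, F₃ (g x) * (x * (x - 1))) +
        ∫ x in (0:ℝ)..1, F₂ (g x) * (2 * x - 1) :=
    integral_add hint3 hint2
  have hsplit2 : (∫ x in (0:ℝ)..1, F₂ (g x) * (2 * x - 1) + F₁ (g x) * 2) =
      (∫ x in (0:ℝ)..1, F₂ (g x) * (2 * x - 1)) + ∫ x in (0:ℝ)..1, F₁ (g x) * 2 :=
    integral_add hint2 hint1
  have hmul2 : (∫ x in (0:ℝ)..1, F₁ (g x) * 2) = (∫ x in (0:ℝ)..1, F₁ (g x)) * 2 :=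
    integral_mul_const 2 _
  -- rewrite the goal integral
  have hgoalint : (∫ s in (0:ℝ)..1,
      (iteratedFDeriv ℝ 3 L (y₂ + s • (y₁ - y₂))) ![y₁ - y₂, y₁ - y₂, y₁ - y₂] * s * (s - 1)) =
      ∫ x in (0:ℝ)..1, F₃ (g x) * (x * (x - 1)) := by
    apply integral_congr
    intro s _
    simp only [← he, ← hgdef]
    rw [hiter (g s), mul_assoc]
  -- linear algebra on the directional derivatives
  have hlin : fderiv ℝ L y₂ (y₁ - ytil₂) + fderiv ℝ L y₂ (ytil₂ - y₂) = F₁ y₂ := by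
    rw [hF₁, he, ← map_add]
    congr 1
    abel
  have hstat₂' : fderiv ℝ Ltil y₂ (ytil₂ - y₂) = 0 :=
    hstat₂ _ (Y₂.sub_mem hytil₂ hy₂)
  -- put everything together
  rw [hgoalint, hstat₂']
  rw [hg0, hg1] at hI1 hibp1 hibp2
  rw [hF₁y₁] at hibp2
  rw [hsplit1] at hibp1
  rw [hsplit2, hmul2, hI1] at hibp2
  linarith [hlin, hibp1, hibp2]
end

section
/- (Nested-subspace case of the abstract error representation.) Let Y be a real normed vector space and L : Y → ℝ a three times continuously (Fréchet) differentiable functional. Let Y₂ ⊆ Y₁ ⊆ Y be linear subspaces. Suppose y₁ ∈ Y₁ satisfies L'(y₁)(δy₁) = 0 for all δy₁ ∈ Y₁, and y₂ ∈ Y₂ satisfies L'(y₂)(δy₂) = 0 for all δy₂ ∈ Y₂. Then for every ỹ₂ ∈ Y₂ one has L(y₁) − L(y₂) = (1/2)·L'(y₂)(y₁ − ỹ₂) + ℛ, where, with e := y₁ − y₂, the remainder is ℛ = (1/2) ∫₀¹ L'''(y₂ + s·e)(e,e,e)·s·(s−1) ds. -/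
/-- Nested-subspace case of the abstract DWR error representation:
for a `C³` functional `L : Y → ℝ` and subspaces `Y₂ ⊆ Y₁ ⊆ Y`,
if `y₁ ∈ Y₁` is stationary for `L` on `Y₁` and `y₂ ∈ Y₂` is stationary for `L`
on `Y₂`, then for every `ỹ₂ ∈ Y₂`, with `e := y₁ − y₂`,
`L(y₁) − L(y₂) = (1/2) L'(y₂)(y₁ − ỹ₂)
  + (1/2) ∫₀¹ L'''(y₂ + s e)(e,e,e) · s(s−1) ds`. -/
theorem nested_error_representation
    {Y : Type*} [NormedAddCommGroup Y] [NormedSpace ℝ Y]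
    (L : Y → ℝ) (hL : ContDiff ℝ 3 L)
    (Y₁ Y₂ : Submodule ℝ Y) (hsub : Y₂ ≤ Y₁)
    (y₁ : Y) (hy₁ : y₁ ∈ Y₁)
    (y₂ : Y) (hy₂ : y₂ ∈ Y₂)
    (hstat₁ : ∀ δ ∈ Y₁, (fderiv ℝ L y₁) δ = 0)
    (hstat₂ : ∀ δ ∈ Y₂, (fderiv ℝ L y₂) δ = 0) :
    ∀ ytil₂ ∈ Y₂,
      L y₁ - L y₂ =
        (1/2) * (fderiv ℝ L y₂) (y₁ - ytil₂) +
        (1/2) * ∫ s in (0:ℝ)..1,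
          (iteratedFDeriv ℝ 3 L (y₂ + s • (y₁ - y₂)))
            ![y₁ - y₂, y₁ - y₂, y₁ - y₂] * s * (s - 1) := by
  intro ytil₂ hytil₂
  set e : Y := y₁ - y₂ with he
  set c : ℝ → Y := fun s => y₂ + s • e with hc
  have hcderiv : ∀ s : ℝ, HasDerivAt c e s := by
    intro s
    have := ((hasDerivAt_id s).smul_const e).const_add y₂
    simp only [one_smul] at this
    exact this
  have hccont : Continuous c := by fun_prop
  -- the directional derivatives along the line
  set G : ℕ → ℝ → ℝ := fun n t => iteratedFDeriv ℝ n L (c t) (fun _ => e) with hG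
  have key : ∀ n : ℕ, (n : WithTop ℕ∞) < 3 → ∀ s : ℝ, HasDerivAt (G n) (G (n+1) s) s := by
    intro n hn s
    have hdiff : Differentiable ℝ (iteratedFDeriv ℝ n L) :=
      hL.differentiable_iteratedFDeriv hn
    have h1 : HasDerivAt (fun t => iteratedFDeriv ℝ n L (c t))
        (fderiv ℝ (iteratedFDeriv ℝ n L) (c s) e) s :=
      (hdiff (c s)).hasFDerivAt.comp_hasDerivAt s (hcderiv s)
    have h2 := ((ContinuousMultilinearMap.apply ℝ (fun _ : Fin n => Y) ℝ
        (fun _ => e)).hasFDerivAt.comp_hasDerivAt s h1)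
    have h3 : HasDerivAt (G n)
        ((fderiv ℝ (iteratedFDeriv ℝ n L) (c s) e) (fun _ => e)) s := h2
    have h4 : G (n+1) s = (fderiv ℝ (iteratedFDeriv ℝ n L) (c s) e) (fun _ => e) := by
      have := iteratedFDeriv_succ_apply_left (𝕜 := ℝ) (f := L) (x := c s)
        (n := n) (fun _ : Fin (n+1) => e)
      exact this
    rw [h4]; exact h3
  have hd0 : ∀ s : ℝ, HasDerivAt (G 0) (G 1 s) s := key 0 (by norm_num)
  have hd1 : ∀ s : ℝ, HasDerivAt (G 1) (G 2 s) s := key 1 (by norm_num)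
  have hd2 : ∀ s : ℝ, HasDerivAt (G 2) (G 3 s) s := key 2 (by norm_num)
  have hc0 : Continuous (G 0) := continuous_iff_continuousAt.mpr fun t => (hd0 t).continuousAt
  have hc1 : Continuous (G 1) := continuous_iff_continuousAt.mpr fun t => (hd1 t).continuousAt
  have hc2 : Continuous (G 2) := continuous_iff_continuousAt.mpr fun t => (hd2 t).continuousAt
  have hc3 : Continuous (G 3) := by
    have := (hL.continuous_iteratedFDeriv (n := 3) le_rfl).comp hccont
    exact (ContinuousMultilinearMap.apply ℝ (fun _ : Fin 3 => Y) ℝ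
      (fun _ => e)).continuous.comp this
  -- FTC
  have hftc : ∫ s in (0:ℝ)..1, G 1 s = G 0 1 - G 0 0 :=
    intervalIntegral.integral_eq_sub_of_hasDerivAt (fun s _ => hd0 s)
      (hc1.intervalIntegrable 0 1)
  -- first integration by parts
  have ibp1 : ∫ s in (0:ℝ)..1, (s^2 - s) * G 3 s =
      (1^2 - 1) * G 2 1 - (0^2 - 0) * G 2 0 - ∫ s in (0:ℝ)..1, (2*s - 1) * G 2 s := by
    apply intervalIntegral.integral_mul_deriv_eq_deriv_mul
    · intro x _
      have : HasDerivAt (fun s : ℝ => s^2 - s) (2*x - 1) x := by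
        simpa [Pi.sub_def] using ((hasDerivAt_pow 2 x).sub (hasDerivAt_id x))
      exact this
    · exact fun x _ => hd2 x
    · exact (Continuous.intervalIntegrable (by fun_prop) 0 1)
    · exact hc3.intervalIntegrable 0 1
  have ibp2 : ∫ s in (0:ℝ)..1, (2*s - 1) * G 2 s =
      (2*1 - 1) * G 1 1 - (2*0 - 1) * G 1 0 - ∫ s in (0:ℝ)..1, 2 * G 1 s := by
    apply intervalIntegral.integral_mul_deriv_eq_deriv_mul
    · intro x _
      simpa using ((hasDerivAt_id x).const_mul 2).sub_const 1
    · exact fun x _ => hd1 x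
    · exact (Continuous.intervalIntegrable (by fun_prop) 0 1)
    · exact hc2.intervalIntegrable 0 1
  have hconst : ∫ s in (0:ℝ)..1, 2 * G 1 s = 2 * (G 0 1 - G 0 0) := by
    rw [intervalIntegral.integral_const_mul, hftc]
  -- identify endpoints
  have hcz : c 0 = y₂ := by simp [hc]
  have hco : c 1 = y₁ := by simp [hc, he]
  have hG0_1 : G 0 1 = L y₁ := by simp [hG, hco]
  have hG0_0 : G 0 0 = L y₂ := by simp [hG, hcz]
  have hG1_1 : G 1 1 = 0 := by
    have hmem : e ∈ Y₁ := Y₁.sub_mem hy₁ (hsub hy₂)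
    have : G 1 1 = fderiv ℝ L y₁ e := by simp [hG, hco, iteratedFDeriv_one_apply]
    rw [this]; exact hstat₁ e hmem
  have hG1_0 : G 1 0 = fderiv ℝ L y₂ (y₁ - ytil₂) := by
    have h1 : G 1 0 = fderiv ℝ L y₂ e := by simp [hG, hcz, iteratedFDeriv_one_apply]
    have h2 : e = (y₁ - ytil₂) + (ytil₂ - y₂) := by rw [he]; abel
    have h3 : fderiv ℝ L y₂ (ytil₂ - y₂) = 0 := hstat₂ _ (Y₂.sub_mem hytil₂ hy₂)
    rw [h1, h2, map_add, h3, add_zero]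
  -- identify the target integral with ∫ (s^2-s) * G 3 s
  have hvec : ![e, e, e] = (fun _ : Fin 3 => e) := by
    funext i; fin_cases i <;> rfl
  have hint : (∫ s in (0:ℝ)..1,
      (iteratedFDeriv ℝ 3 L (y₂ + s • (y₁ - y₂)))
        ![y₁ - y₂, y₁ - y₂, y₁ - y₂] * s * (s - 1)) =
      ∫ s in (0:ℝ)..1, (s^2 - s) * G 3 s := by
    apply intervalIntegral.integral_congr
    intro s _
    show (iteratedFDeriv ℝ 3 L (c s)) ![e, e, e] * s * (s - 1) = (s^2 - s) * G 3 s
    rw [hvec]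
    show G 3 s * s * (s - 1) = (s^2 - s) * G 3 s
    ring
  rw [hint]
  have := ibp1
  rw [ibp2, hconst] at this
  have hfin : L y₁ - L y₂ =
      (1/2) * fderiv ℝ L y₂ (y₁ - ytil₂) + (1/2) * ∫ s in (0:ℝ)..1, (s^2 - s) * G 3 s := by
    rw [← hG0_1, ← hG0_0, ← hG1_0, this, hG1_1, hG1_0]
    ring
  exact hfin
end

section
/- (Exactness of the DWR error representation for quadratic functionals.) Let Y be a real normed vector space and L : Y → ℝ a three times continuously (Fréchet) differentiable functional whose third Fréchet derivative vanishes identically, i.e. L'''(y)(φ,ψ,χ) = 0 for all y, φ, ψ, χ ∈ Y. Let Y₂ ⊆ Y₁ ⊆ Y be linear subspaces, let y₁ ∈ Y₁ satisfy L'(y₁)(δy₁) = 0 for all δy₁ ∈ Y₁, and let y₂ ∈ Y₂ satisfy L'(y₂)(δy₂) = 0 for all δy₂ ∈ Y₂. Then for every ỹ₂ ∈ Y₂ the error representation is exact: L(y₁) − L(y₂) = (1/2)·L'(y₂)(y₁ − ỹ₂). -/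
/-- Exactness of the DWR error representation for quadratic functionals:
if the third Fréchet derivative of a `C³` functional `L : Y → ℝ` vanishes
identically, then in the nested-subspace setting the error representation is
exact: `L(y₁) − L(y₂) = (1/2) L'(y₂)(y₁ − ỹ₂)` for every `ỹ₂ ∈ Y₂`. -/
theorem exact_error_representation_quadratic
    {Y : Type*} [NormedAddCommGroup Y] [NormedSpace ℝ Y]
    (L : Y → ℝ) (hL : ContDiff ℝ 3 L)
    (hthird : ∀ y φ ψ χ : Y, (iteratedFDeriv ℝ 3 L y) ![φ, ψ, χ] = 0)
    (Y₁ Y₂ : Submodule ℝ Y) (hsub : Y₂ ≤ Y₁)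
    (y₁ : Y) (hy₁ : y₁ ∈ Y₁)
    (y₂ : Y) (hy₂ : y₂ ∈ Y₂)
    (hstat₁ : ∀ δ ∈ Y₁, (fderiv ℝ L y₁) δ = 0)
    (hstat₂ : ∀ δ ∈ Y₂, (fderiv ℝ L y₂) δ = 0) :
    ∀ ytil₂ ∈ Y₂,
      L y₁ - L y₂ = (1/2) * (fderiv ℝ L y₂) (y₁ - ytil₂) := by
  intro ytil₂ hytil
  have hdiff : Differentiable ℝ L := hL.differentiable (by norm_num)
  have hL1 : ContDiff ℝ 2 (fderiv ℝ L) := hL.fderiv_right (by norm_num)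
  have hd1 : Differentiable ℝ (fderiv ℝ L) := hL1.differentiable (by norm_num)
  have hd2 : Differentiable ℝ (iteratedFDeriv ℝ 2 L) :=
    hL.differentiable_iteratedFDeriv (by norm_num)
  set e : Y := y₁ - y₂ with he
  -- nested form of the second-derivative function along e
  have h2fun : (fun z => fderiv ℝ (fderiv ℝ L) z e e)
      = fun z => iteratedFDeriv ℝ 2 L z ![e, e] := by
    funext z
    rw [iteratedFDeriv_two_apply]
    simp
  -- third derivative vanishes in nested form
  have key3 : ∀ y φ : Y, fderiv ℝ (fun z => fderiv ℝ (fderiv ℝ L) z e e) y φ = 0 := by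
    intro y φ
    rw [h2fun, fderiv_continuousMultilinear_apply_const_apply (hd2 y) ![e, e] φ]
    have h3 := hthird y φ e e
    rw [iteratedFDeriv_succ_apply_left] at h3
    simpa [Fin.tail] using h3
  -- the curve
  set c : ℝ → Y := fun t => y₂ + t • e with hc
  have hcd : ∀ t : ℝ, HasDerivAt c e t := fun t => by
    simpa [hc] using ((hasDerivAt_id t).smul_const e).const_add y₂
  set g : ℝ → ℝ := fun t => L (c t) with hg
  set g1 : ℝ → ℝ := fun t => fderiv ℝ L (c t) e with hg1
  set g2 : ℝ → ℝ := fun t => fderiv ℝ (fderiv ℝ L) (c t) e e with hg2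
  have hgd : ∀ t, HasDerivAt g (g1 t) t := fun t =>
    ((hdiff (c t)).hasFDerivAt).comp_hasDerivAt t (hcd t)
  have hg1d : ∀ t, HasDerivAt g1 (g2 t) t := by
    intro t
    have hF : HasFDerivAt (fun z => fderiv ℝ L z e)
        ((ContinuousLinearMap.apply ℝ ℝ e).comp (fderiv ℝ (fderiv ℝ L) (c t))) (c t) :=
      (ContinuousLinearMap.apply ℝ ℝ e).hasFDerivAt.comp (c t) ((hd1 (c t)).hasFDerivAt)
    exact hF.comp_hasDerivAt t (hcd t)
  have hFd : Differentiable ℝ (fun z => fderiv ℝ (fderiv ℝ L) z e e) := by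
    rw [h2fun]; exact hd2.continuousMultilinear_apply_const ![e, e]
  have hg2d : ∀ t, HasDerivAt g2 0 t := by
    intro t
    have := ((hFd (c t)).hasFDerivAt).comp_hasDerivAt t (hcd t)
    rwa [key3 (c t) e] at this
  -- g2 is constant
  have hg2c : ∀ s t : ℝ, g2 s = g2 t :=
    is_const_of_deriv_eq_zero (fun t => (hg2d t).differentiableAt)
      (fun t => (hg2d t).deriv)
  set Q : ℝ := g2 0 with hQ
  -- g1 is affine: g1 t = g1 0 + t * Q
  have hg1aff : ∀ t : ℝ, g1 t = g1 0 + t * Q := by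
    intro t
    have hk : ∀ s : ℝ, HasDerivAt (fun s => g1 s - s * Q) 0 s := by
      intro s
      have := (hg1d s).sub (hasDerivAt_mul_const Q)
      rwa [hg2c s 0, ← hQ, sub_self] at this
    have := is_const_of_deriv_eq_zero (fun s => (hk s).differentiableAt)
      (fun s => (hk s).deriv) t 0
    simp only [zero_mul, sub_zero] at this
    linarith
  -- Taylor: g 1 - g 0 = g1 0 + Q / 2
  have htaylor : g 1 - g 0 = g1 0 + Q / 2 := by
    have hk : ∀ s : ℝ, HasDerivAt (fun s => g s - (g1 0 * s + Q * s ^ 2 / 2)) 0 s := by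
      intro s
      have hp : HasDerivAt (fun s : ℝ => g1 0 * s + Q * s ^ 2 / 2) (g1 0 + Q * s) s := by
        have h1 : HasDerivAt (fun s : ℝ => g1 0 * s) (g1 0) s := by
          simpa using (hasDerivAt_id s).const_mul (g1 0)
        have h2 : HasDerivAt (fun s : ℝ => Q * s ^ 2 / 2) (Q * s) s := by
          have := ((hasDerivAt_pow 2 s).const_mul Q).div_const 2
          simpa using this.congr_deriv (by ring)
        exact h1.add h2
      have := (hgd s).sub hp
      rw [hg1aff s] at this
      exact this.congr_deriv (by ring)
    have := is_const_of_deriv_eq_zero (fun s => (hk s).differentiableAt)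
      (fun s => (hk s).deriv) 1 0
    simp only [mul_one, one_pow, mul_zero, zero_pow, zero_div, add_zero, sub_zero] at this
    linarith
  -- stationarity at t = 1
  have hc1 : c 1 = y₁ := by simp [hc, he]
  have hg11 : g1 1 = 0 := by
    have : e ∈ Y₁ := Y₁.sub_mem hy₁ (hsub hy₂)
    simp only [hg1, hc1]
    exact hstat₁ e this
  have hQval : Q = -g1 0 := by
    have := hg1aff 1
    rw [hg11] at this
    linarith
  have hc0 : c 0 = y₂ := by simp [hc]
  have hmain : L y₁ - L y₂ = (1/2) * g1 0 := by
    have hgv : g 1 - g 0 = L y₁ - L y₂ := by simp [hg, hc1, hc0]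
    rw [← hgv, htaylor, hQval]; ring
  -- replace e by y₁ - ytil₂
  have hfin : (fderiv ℝ L y₂) (y₁ - ytil₂) = g1 0 := by
    have hsplit : (y₁ - ytil₂) = e + (y₂ - ytil₂) := by rw [he]; abel
    rw [hsplit, map_add, hstat₂ (y₂ - ytil₂) (Y₂.sub_mem hy₂ hytil), add_zero]
    simp [hg1, hc0]
  rw [hfin, hmain]
end
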